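/- Let m and ℓ be integers with 0 ≤ m ≤ ℓ. Define P_ℓ^m(x) = ((−1)^m / (2^ℓ ℓ!)) (1−x²)^{m/2} d^{ℓ+m}/dx^{ℓ+m} (x²−1)^ℓ. Then for x₁,x₂,x₃ ∈ ℝ with r² = x₁²+x₂²+x₃² > 0, the function r^ℓ (x₂ + i x₃)^m (x₂²+x₃²)^{−m/2} P_ℓ^m(x₁/r) is a homogeneous polynomial of degree ℓ in (x₁,x₂,x₃). -/

import Mathlib

open MvPolynomial Complex

/-- The associated Legendre function `P_ℓ^m`, defined by the Rodrigues-type formula. -/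
noncomputable def assocLegendre (ℓ m : ℕ) (t : ℝ) : ℝ :=
  ((-1 : ℝ) ^ m / (2 ^ ℓ * Nat.factorial ℓ)) * (Real.sqrt (1 - t ^ 2)) ^ m
    * iteratedDeriv (ℓ + m) (fun s : ℝ => (s ^ 2 - 1) ^ ℓ) t

namespace SolidHarmAux

lemma itd (n : ℕ) (p : Polynomial ℝ) :
    iteratedDeriv n (fun x : ℝ => p.eval x)
      = fun x => (Polynomial.derivative^[n] p).eval x := by
  induction n generalizing p with
  | zero => simp
  | succ n ih =>
    rw [iteratedDeriv_succ, ih p]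
    funext x
    rw [Function.iterate_succ_apply']
    exact Polynomial.deriv (p := Polynomial.derivative^[n] p)

lemma negX_pow (n : ℕ) : ((-Polynomial.X : Polynomial ℝ)) ^ n
    = Polynomial.C ((-1 : ℝ) ^ n) * Polynomial.X ^ n := by
  rw [show (-Polynomial.X : Polynomial ℝ) = Polynomial.C (-1) * Polynomial.X by simp,
    mul_pow, ← Polynomial.C_pow]

lemma coeff_comp_neg (p : Polynomial ℝ) (k : ℕ) :
    (p.comp (-Polynomial.X)).coeff k = (-1) ^ k * p.coeff k := by
  induction p using Polynomial.induction_on' with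
  | add p q hp hq => simp [Polynomial.add_comp, hp, hq, mul_add]
  | monomial n a =>
    rw [← Polynomial.C_mul_X_pow_eq_monomial, Polynomial.mul_comp, Polynomial.pow_comp,
      Polynomial.C_comp, Polynomial.X_comp, negX_pow]
    rw [← mul_assoc, ← Polynomial.C_mul]
    simp only [Polynomial.coeff_C_mul, Polynomial.coeff_X_pow, Polynomial.coeff_monomial]
    rcases eq_or_ne n k with rfl | h
    · simp [mul_comm]
    · simp [h, Ne.symm h]

lemma iter_deriv_comp_neg (n : ℕ) (p : Polynomial ℝ) :
    Polynomial.derivative^[n] (p.comp (-Polynomial.X))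
      = (-1) ^ n * (Polynomial.derivative^[n] p).comp (-Polynomial.X) := by
  induction n generalizing p with
  | zero => simp
  | succ n ih =>
    have h1 : Polynomial.derivative (p.comp (-Polynomial.X))
        = -(Polynomial.derivative p).comp (-Polynomial.X) := by
      simp [Polynomial.derivative_comp]
    rw [Function.iterate_succ_apply, Function.iterate_succ_apply, h1,
      Polynomial.iterate_derivative_neg, ih (Polynomial.derivative p), pow_succ]
    ring

/-- The Rodrigues polynomial: `(ℓ+m)`-th derivative of `(X² − 1)^ℓ`. -/
noncomputable def qpoly (ℓ m : ℕ) : Polynomial ℝ :=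
  Polynomial.derivative^[ℓ + m] ((Polynomial.X ^ 2 - 1) ^ ℓ)

lemma qpoly_natDegree_le (ℓ m : ℕ) : (qpoly ℓ m).natDegree ≤ ℓ - m := by
  have h1 : ((Polynomial.X ^ 2 - 1 : Polynomial ℝ) ^ ℓ).natDegree ≤ 2 * ℓ := by
    refine le_trans (Polynomial.natDegree_pow_le) ?_
    have h2 : (Polynomial.X ^ 2 - 1 : Polynomial ℝ).natDegree ≤ 2 := by
      refine le_trans (Polynomial.natDegree_sub_le _ _) ?_
      simp [Polynomial.natDegree_X_pow]
    nlinarith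
  refine le_trans (Polynomial.natDegree_iterate_derivative _ _) ?_
  omega

lemma even_comp (ℓ : ℕ) :
    ((Polynomial.X ^ 2 - 1 : Polynomial ℝ) ^ ℓ).comp (-Polynomial.X)
      = (Polynomial.X ^ 2 - 1) ^ ℓ := by
  simp [Polynomial.pow_comp, Polynomial.sub_comp, Polynomial.X_comp, Polynomial.one_comp,
    neg_sq]

lemma qpoly_coeff_eq_zero (ℓ m k : ℕ) (hk : ¬ Even (ℓ + m + k)) :
    (qpoly ℓ m).coeff k = 0 := by
  have h := iter_deriv_comp_neg (ℓ + m) ((Polynomial.X ^ 2 - 1) ^ ℓ)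
  rw [even_comp ℓ] at h
  have h2 := congrArg (fun p => Polynomial.coeff p k) h
  rw [show ((-1 : Polynomial ℝ)) ^ (ℓ + m) = Polynomial.C ((-1 : ℝ) ^ (ℓ + m)) by simp,
    Polynomial.coeff_C_mul, coeff_comp_neg] at h2
  have h3 : ((-1 : ℝ)) ^ (ℓ + m) * (-1 : ℝ) ^ k = -1 := by
    rw [← pow_add]
    exact Odd.neg_one_pow (Nat.not_even_iff_odd.mp hk)
  have h4 : (qpoly ℓ m).coeff k = -(qpoly ℓ m).coeff k := by
    calc (qpoly ℓ m).coeff k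
        = (-1 : ℝ) ^ (ℓ + m) * ((-1) ^ k * (qpoly ℓ m).coeff k) := h2
      _ = ((-1 : ℝ) ^ (ℓ + m) * (-1) ^ k) * (qpoly ℓ m).coeff k := by ring
      _ = -(qpoly ℓ m).coeff k := by rw [h3]; ring
  linarith

end SolidHarmAux

open SolidHarmAux

theorem solid_spherical_harmonic_polynomial (ℓ m : ℕ) (hm : m ≤ ℓ) :
    ∃ P : MvPolynomial (Fin 3) ℂ, P.IsHomogeneous ℓ ∧
      ∀ x₁ x₂ x₃ : ℝ, x₁ ^ 2 + x₂ ^ 2 + x₃ ^ 2 > 0 →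
        eval (fun i => (![ (x₁ : ℂ), (x₂ : ℂ), (x₃ : ℂ)] i)) P
          = (Real.sqrt (x₁ ^ 2 + x₂ ^ 2 + x₃ ^ 2) : ℂ) ^ ℓ
              * ((x₂ : ℂ) + Complex.I * (x₃ : ℂ)) ^ m
              / ((Real.sqrt (x₂ ^ 2 + x₃ ^ 2) : ℂ)) ^ m
              * (assocLegendre ℓ m (x₁ / Real.sqrt (x₁ ^ 2 + x₂ ^ 2 + x₃ ^ 2)) : ℂ) := by
  classical
  set c : ℝ := (-1 : ℝ) ^ m / (2 ^ ℓ * Nat.factorial ℓ) with hc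
  set q : Polynomial ℝ := qpoly ℓ m with hq
  set base : MvPolynomial (Fin 3) ℂ := X 0 ^ 2 + X 1 ^ 2 + X 2 ^ 2 with hbase
  refine ⟨C (c : ℂ) * (X 1 + C Complex.I * X 2) ^ m *
      ∑ k ∈ Finset.range (ℓ - m + 1),
        C ((q.coeff k : ℂ)) * X 0 ^ k * base ^ ((ℓ - m - k) / 2), ?_, ?_⟩
  · -- homogeneity
    have hbaseH : base.IsHomogeneous 2 := by
      rw [hbase]
      exact ((isHomogeneous_X_pow _ _).add (isHomogeneous_X_pow _ _)).add
        (isHomogeneous_X_pow _ _)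
    have hwH : ((X 1 + C Complex.I * X 2 : MvPolynomial (Fin 3) ℂ)).IsHomogeneous 1 :=
      (isHomogeneous_X _ _).add (isHomogeneous_C_mul_X _ _)
    have hsumH : (∑ k ∈ Finset.range (ℓ - m + 1),
        C ((q.coeff k : ℂ)) * X 0 ^ k * base ^ ((ℓ - m - k) / 2)).IsHomogeneous (ℓ - m) := by
      refine MvPolynomial.IsHomogeneous.sum _ _ _ ?_
      intro k hk
      rw [Finset.mem_range] at hk
      rcases eq_or_ne (q.coeff k) 0 with h0 | h0
      · simp only [h0, Complex.ofReal_zero, map_zero, zero_mul]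
        exact isHomogeneous_zero _ _ _
      · have hev : Even (ℓ + m + k) := by
          by_contra hcon
          exact h0 (qpoly_coeff_eq_zero ℓ m k hcon)
        rw [Nat.even_iff] at hev
        have hnum : 0 + 1 * k + 2 * ((ℓ - m - k) / 2) = ℓ - m := by omega
        have hterm := ((isHomogeneous_C _ ((q.coeff k : ℂ))).mul
          ((isHomogeneous_X _ (0 : Fin 3)).pow k)).mul (hbaseH.pow ((ℓ - m - k) / 2))
        rwa [hnum] at hterm
    have hmain := ((isHomogeneous_C _ ((c : ℝ) : ℂ)).mul (hwH.pow m)).mul hsumH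
    have hnum2 : 0 + 1 * m + (ℓ - m) = ℓ := by omega
    rwa [hnum2] at hmain
  · -- evaluation
    intro x₁ x₂ x₃ hRpos
    set R : ℝ := x₁ ^ 2 + x₂ ^ 2 + x₃ ^ 2 with hR
    have hR0 : (0 : ℝ) ≤ R := le_of_lt hRpos
    set r : ℝ := Real.sqrt R with hr
    have hrpos : 0 < r := Real.sqrt_pos.mpr hRpos
    have hrne : r ≠ 0 := ne_of_gt hrpos
    have hr2 : r ^ 2 = R := Real.sq_sqrt hR0
    set s : ℝ := Real.sqrt (x₂ ^ 2 + x₃ ^ 2) with hs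
    -- assocLegendre in terms of qpoly
    have hsqrt : Real.sqrt (1 - (x₁ / r) ^ 2) = s / r := by
      have h1 : 1 - (x₁ / r) ^ 2 = (x₂ ^ 2 + x₃ ^ 2) / R := by
        rw [div_pow, hr2]
        field_simp
        rw [hR]; ring
      rw [h1, Real.sqrt_div (by positivity) R, ← hs, ← hr]
    have hAL : assocLegendre ℓ m (x₁ / r) = c * (s / r) ^ m * q.eval (x₁ / r) := by
      unfold assocLegendre
      rw [show (fun s : ℝ => (s ^ 2 - 1) ^ ℓ)
          = fun x : ℝ => ((Polynomial.X ^ 2 - 1 : Polynomial ℝ) ^ ℓ).eval x by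
          funext x; simp, itd, hsqrt]
      rw [hq]; unfold qpoly
      ring
    -- key real identity
    have keyR : r ^ (ℓ - m) * q.eval (x₁ / r)
        = ∑ k ∈ Finset.range (ℓ - m + 1), q.coeff k * x₁ ^ k * R ^ ((ℓ - m - k) / 2) := by
      rw [Polynomial.eval_eq_sum_range'
        (lt_of_le_of_lt (qpoly_natDegree_le ℓ m) (Nat.lt_succ_self _)) (x₁ / r),
        Finset.mul_sum]
      refine Finset.sum_congr rfl ?_
      intro k hk
      rw [Finset.mem_range] at hk
      rcases eq_or_ne (q.coeff k) 0 with h0 | h0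
      · have h0' : (qpoly ℓ m).coeff k = 0 := h0
        simp [h0, h0']
      · have hev : Even (ℓ + m + k) := by
          by_contra hcon
          exact h0 (qpoly_coeff_eq_zero ℓ m k hcon)
        rw [Nat.even_iff] at hev
        have hsplit : r ^ (ℓ - m) = r ^ k * R ^ ((ℓ - m - k) / 2) := by
          rw [← hr2, ← pow_mul, ← pow_add]
          congr 1
          omega
        rw [hsplit, div_pow]
        field_simp
        ring
    have keyC : ((r : ℂ)) ^ (ℓ - m) * ((q.eval (x₁ / r) : ℝ) : ℂ)
        = ∑ k ∈ Finset.range (ℓ - m + 1),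
            ((q.coeff k : ℂ)) * (x₁ : ℂ) ^ k
              * ((x₁ : ℂ) ^ 2 + (x₂ : ℂ) ^ 2 + (x₃ : ℂ) ^ 2) ^ ((ℓ - m - k) / 2) := by
      have h := congrArg (fun t : ℝ => (t : ℂ)) keyR
      rw [hR] at h
      push_cast at h ⊢
      convert h using 2
    -- evaluate the polynomial
    have hev : eval (fun i => (![ (x₁ : ℂ), (x₂ : ℂ), (x₃ : ℂ)] i))
        (C (c : ℂ) * (X 1 + C Complex.I * X 2) ^ m *
          ∑ k ∈ Finset.range (ℓ - m + 1),
            C ((q.coeff k : ℂ)) * X 0 ^ k * base ^ ((ℓ - m - k) / 2))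
        = (c : ℂ) * ((x₂ : ℂ) + Complex.I * (x₃ : ℂ)) ^ m *
          ∑ k ∈ Finset.range (ℓ - m + 1),
            ((q.coeff k : ℂ)) * (x₁ : ℂ) ^ k
              * ((x₁ : ℂ) ^ 2 + (x₂ : ℂ) ^ 2 + (x₃ : ℂ) ^ 2) ^ ((ℓ - m - k) / 2) := by
      rw [hbase]
      simp [eval_mul, eval_pow, eval_add, map_sum, Matrix.cons_val_zero, Matrix.cons_val_one,
        Matrix.head_cons, Matrix.cons_val_two, Matrix.tail_cons]
    rw [hev, hAL]
    push_cast
    rw [← keyC]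
    by_cases hsm : ((s : ℂ)) ^ m = 0
    · -- degenerate case: x₂ = x₃ = 0 and m > 0
      obtain ⟨h1, hm0⟩ := pow_eq_zero_iff'.mp hsm
      have hs0 : s = 0 := by exact_mod_cast h1
      have hx23 : x₂ ^ 2 + x₃ ^ 2 = 0 := by
        rw [← Real.sq_sqrt (show (0:ℝ) ≤ x₂ ^ 2 + x₃ ^ 2 by positivity), ← hs, hs0]
        ring
      have hx₂ : x₂ = 0 := by nlinarith
      have hx₃ : x₃ = 0 := by nlinarith
      simp [hsm, hx₂, hx₃, zero_pow hm0]
    · have hrC : (r : ℂ) ≠ 0 := by exact_mod_cast hrne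
      have hrpow : ((r : ℂ)) ^ ℓ = ((r : ℂ)) ^ (ℓ - m) * ((r : ℂ)) ^ m := by
        rw [← pow_add, Nat.sub_add_cancel hm]
      rw [hrpow]
      field_simp
      have hone : (r : ℂ) ^ m * ((s : ℂ) / (r : ℂ)) ^ m = (s : ℂ) ^ m := by
        rw [← mul_pow, mul_div_cancel₀ _ hrC]
      rw [mul_assoc _ ((r : ℂ) ^ m), hone]
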